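/- Let Γ be a group acting transitively on a set Ω and generated by a finite symmetric set S, and fix ω₀ ∈ Ω. Then the semidirect product S(Γ,Ω) = FSym(Ω) ⋊ Γ is generated by S together with the transpositions { (ω₀ ω₀s) : s ∈ S, ω₀s ≠ ω₀ }. -/

import Mathlib

/-- The group of finitely supported permutations of `Ω`. -/
def FSym (Ω : Type*) : Subgroup (Equiv.Perm Ω) where
  carrier := {σ | {x | σ x ≠ x}.Finite}
  one_mem' := by
    have h : {x : Ω | (1 : Equiv.Perm Ω) x ≠ x} = ∅ := by ext x; simp
    show ({x : Ω | (1 : Equiv.Perm Ω) x ≠ x}).Finite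
    rw [h]; exact Set.finite_empty
  mul_mem' := by
    intro σ τ hσ hτ
    apply (Set.Finite.union hσ hτ).subset
    intro x hx
    by_cases h : τ x = x
    · left
      simpa [Equiv.Perm.mul_apply, h] using hx
    · right; exact h
  inv_mem' := by
    intro σ hσ
    apply hσ.subset
    intro x hx
    simp only [Set.mem_setOf_eq] at hx ⊢
    intro h
    exact hx (σ.injective (by rw [show σ (σ⁻¹ x) = x from σ.apply_symm_apply x, h]))

instance FSym.normal (Ω : Type*) : (FSym Ω).Normal := by
  constructor
  intro σ hσ τ
  show {x | (τ * σ * τ⁻¹ : Equiv.Perm Ω) x ≠ x}.Finite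
  apply (Set.Finite.image τ hσ).subset
  intro x hx
  simp only [Set.mem_setOf_eq, Equiv.Perm.mul_apply] at hx
  refine ⟨τ⁻¹ x, ?_, τ.apply_symm_apply x⟩
  intro h
  exact hx (by rw [h, show τ (τ⁻¹ x) = x from τ.apply_symm_apply x])

/-- The action of `Γ` on `FSym Ω` induced by an action of `Γ` on `Ω`. -/
def fsymConj (Γ Ω : Type*) [Group Γ] [MulAction Γ Ω] : Γ →* MulAut (FSym Ω) :=
  MulAut.conjNormal.comp (MulAction.toPermHom Γ Ω)

/-- The transposition `(a b)` as an element of `FSym Ω`. -/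
def swapF {Ω : Type*} [DecidableEq Ω] (a b : Ω) : FSym Ω :=
  ⟨Equiv.swap a b, by
    apply (Set.Finite.insert a (Set.finite_singleton b)).subset
    intro x hx
    rcases (Equiv.swap_apply_ne_self_iff.mp hx).2 with h | h <;> simp [h]⟩


section Aux
open Equiv SemidirectProduct MulAction

variable {Γ Ω : Type*} [Group Γ] [MulAction Γ Ω] [DecidableEq Ω]

lemma swapF_coe (a b : Ω) : ((swapF a b : FSym Ω) : Equiv.Perm Ω) = Equiv.swap a b := rfl

lemma swapF_self (a : Ω) : swapF a a = (1 : FSym Ω) := by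
  apply Subtype.ext
  simp [swapF_coe, Equiv.swap_self]
  rfl

lemma swapF_comm (a b : Ω) : swapF a b = swapF b a := by
  apply Subtype.ext
  simp [swapF_coe, Equiv.swap_comm]

lemma fsymConj_swapF (g : Γ) (a b : Ω) :
    fsymConj Γ Ω g (swapF a b) = swapF (g • a) (g • b) := by
  apply Subtype.ext
  show ((MulAut.conjNormal (MulAction.toPermHom Γ Ω g)) (swapF a b) : Equiv.Perm Ω)
      = Equiv.swap (g • a) (g • b)
  rw [MulAut.conjNormal_apply]
  have := Equiv.swap_apply_apply (MulAction.toPermHom Γ Ω g) a b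
  simpa [swapF_coe] using this.symm

lemma swapF_trans {a b c : Ω} (hab : a ≠ b) (hac : a ≠ c) :
    swapF a c = swapF b c * swapF a b * swapF b c := by
  apply Subtype.ext
  show Equiv.swap a c = Equiv.swap b c * Equiv.swap a b * Equiv.swap b c
  rw [Equiv.swap_mul_swap_mul_swap hab hac, Equiv.swap_comm]

end Aux

/-- if `Γ` acts transitively on `Ω` and is generated by the finite
symmetric set `S`, then `S(Γ,Ω) = FSym(Ω) ⋊ Γ` is generated by `S` together with
the transpositions `(ω₀ ω₀s)` for `s ∈ S` with `s•ω₀ ≠ ω₀`. -/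
theorem symEnrichment_generated {Γ Ω : Type*} [Group Γ] [MulAction Γ Ω]
    [MulAction.IsPretransitive Γ Ω] [DecidableEq Ω]
    (S : Set Γ) (hSfin : S.Finite) (hSsymm : S⁻¹ = S) (hgen : Subgroup.closure S = ⊤)
    (ω₀ : Ω) :
    Subgroup.closure
      ((⇑SemidirectProduct.inr '' S) ∪
        {x : FSym Ω ⋊[fsymConj Γ Ω] Γ | ∃ s ∈ S, s • ω₀ ≠ ω₀ ∧
          x = SemidirectProduct.inl (swapF ω₀ (s • ω₀))}) = ⊤ := by
  classical
  set H := Subgroup.closure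
      ((⇑SemidirectProduct.inr '' S) ∪
        {x : FSym Ω ⋊[fsymConj Γ Ω] Γ | ∃ s ∈ S, s • ω₀ ≠ ω₀ ∧
          x = SemidirectProduct.inl (swapF ω₀ (s • ω₀))}) with hH
  show H = ⊤
  have hinr : ∀ g : Γ, SemidirectProduct.inr g ∈ H := by
    intro g
    have h1 : Subgroup.closure ((SemidirectProduct.inr : Γ →* FSym Ω ⋊[fsymConj Γ Ω] Γ) '' S) ≤ H :=
      Subgroup.closure_mono Set.subset_union_left
    have hg : g ∈ Subgroup.closure S := hgen ▸ Subgroup.mem_top g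
    exact h1 (by
      rw [← MonoidHom.map_closure]
      exact Subgroup.mem_map_of_mem _ hg)
  have hconj : ∀ (g : Γ) (n : FSym Ω), SemidirectProduct.inl n ∈ H →
      SemidirectProduct.inl (fsymConj Γ Ω g n) ∈ H := by
    intro g n hn
    rw [SemidirectProduct.inl_aut]
    exact mul_mem (mul_mem (hinr g) hn) (hinr g⁻¹)
  have hbase : ∀ s ∈ S, SemidirectProduct.inl (swapF ω₀ (s • ω₀)) ∈ H := by
    intro s hs
    by_cases h : s • ω₀ = ω₀
    · rw [h, swapF_self, map_one]; exact one_mem H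
    · exact Subgroup.subset_closure (Or.inr ⟨s, hs, h, rfl⟩)
  have hstep : ∀ {a b c : Ω}, SemidirectProduct.inl (swapF a b) ∈ H →
      SemidirectProduct.inl (swapF b c) ∈ H →
      SemidirectProduct.inl (swapF a c) ∈ H := by
    intro a b c h1 h2
    rcases eq_or_ne a b with rfl | hab
    · exact h2
    rcases eq_or_ne a c with rfl | hac
    · rw [swapF_self, map_one]; exact one_mem H
    rw [swapF_trans hab hac, map_mul, map_mul]
    exact mul_mem (mul_mem h2 h1) h2
  have horb : ∀ g : Γ, SemidirectProduct.inl (swapF ω₀ (g • ω₀)) ∈ H := by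
    intro g
    have hg : g ∈ Subgroup.closure S := hgen ▸ Subgroup.mem_top g
    induction hg using Subgroup.closure_induction with
    | mem s hs => exact hbase s hs
    | one => rw [one_smul, swapF_self, map_one]; exact one_mem H
    | mul x y hx hy ihx ihy =>
        have h2 : SemidirectProduct.inl (fsymConj Γ Ω x (swapF ω₀ (y • ω₀))) ∈ H :=
          hconj x _ ihy
        rw [fsymConj_swapF, smul_smul] at h2
        exact hstep ihx h2
    | inv x hx ihx =>
        have h2 : SemidirectProduct.inl (fsymConj Γ Ω x⁻¹ (swapF ω₀ (x • ω₀))) ∈ H :=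
          hconj x⁻¹ _ ihx
        rw [fsymConj_swapF, inv_smul_smul] at h2
        rw [swapF_comm] at h2
        exact h2
  have hswap : ∀ a b : Ω, SemidirectProduct.inl (swapF a b) ∈ H := by
    intro a b
    obtain ⟨g, hg⟩ := MulAction.exists_smul_eq Γ ω₀ a
    obtain ⟨k, hk⟩ := MulAction.exists_smul_eq Γ ω₀ (g⁻¹ • b)
    have h2 : SemidirectProduct.inl (fsymConj Γ Ω g (swapF ω₀ (k • ω₀))) ∈ H :=
      hconj g _ (horb k)
    rw [fsymConj_swapF, hg, hk, smul_inv_smul] at h2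
    exact h2
  have hinl : ∀ n : FSym Ω, SemidirectProduct.inl n ∈ H := by
    intro n
    have hn : (n : Equiv.Perm Ω) ∈ Subgroup.closure {f : Equiv.Perm Ω | f.IsSwap} := by
      refine (mem_closure_isSwap (fun f hf => hf)).mpr ⟨?_, ?_⟩
      · have : (MulAction.fixedBy Ω (n : Equiv.Perm Ω))ᶜ = {x | (n : Equiv.Perm Ω) x ≠ x} := by
          ext x; simp [MulAction.fixedBy, Equiv.Perm.smul_def]
        rw [this]; exact n.2
      · intro x
        rcases eq_or_ne ((n : Equiv.Perm Ω) x) x with h | h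
        · rw [h]; exact MulAction.mem_orbit_self x
        · exact ⟨⟨Equiv.swap x ((n : Equiv.Perm Ω) x),
            Subgroup.subset_closure ⟨x, _, Ne.symm h, rfl⟩⟩,
            Equiv.swap_apply_left _ _⟩
    have hle : Subgroup.closure {f : Equiv.Perm Ω | f.IsSwap} ≤
        Subgroup.map (FSym Ω).subtype (Subgroup.comap
          (SemidirectProduct.inl : FSym Ω →* FSym Ω ⋊[fsymConj Γ Ω] Γ) H) := by
      rw [Subgroup.closure_le]
      rintro f ⟨a, b, -, rfl⟩
      exact ⟨swapF a b, hswap a b, rfl⟩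
    obtain ⟨m, hm, hmn⟩ := hle hn
    have : m = n := Subtype.ext hmn
    rw [← this]
    exact hm
  rw [eq_top_iff]
  intro x _
  rw [← SemidirectProduct.inl_left_mul_inr_right x]
  exact mul_mem (hinl x.left) (hinr x.right)
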